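/- The Jensen–Shannon generator f(u) = (u/2)·log u − ((u+1)/2)·log((u+1)/2) satisfies the one-sided quadratic comparison bounds: f(u) ≤ (1/8)·(u−1)² for all u ≥ 1, and f(u) ≥ (1/8)·(u−1)² for all u with 0 < u ≤ 1. -/

import Mathlib

open Real

private lemma js_hasDerivAt (u : ℝ) (hu : 0 < u) :
    HasDerivAt (fun u : ℝ => 1/8 * (u - 1)^2 -
        (u / 2 * Real.log u - (u + 1) / 2 * Real.log ((u + 1) / 2)))
      ((u - 1)/4 - (1/2 * Real.log u - 1/2 * Real.log ((u + 1) / 2))) u := by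
  have h0 : (0:ℝ) < (u + 1) / 2 := by linarith
  have h1 : HasDerivAt (fun u : ℝ => 1/8 * (u - 1)^2) ((u - 1)/4) u := by
    have : HasDerivAt (fun u : ℝ => (u - 1)^2) (2 * (u - 1)^1 * 1) u :=
      ((hasDerivAt_id u).sub_const 1).pow 2
    simpa [mul_comm, mul_assoc, mul_left_comm] using (this.const_mul (1/8 : ℝ)).congr_deriv (by ring)
  have h2 : HasDerivAt (fun u : ℝ => u / 2 * Real.log u) (1/2 * Real.log u + 1/2) u := by
    have hl : HasDerivAt Real.log u⁻¹ u := Real.hasDerivAt_log (ne_of_gt hu)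
    have hd : HasDerivAt (fun u : ℝ => u / 2) (1/2) u := by
      simpa using (hasDerivAt_id u).div_const 2
    have : HasDerivAt (fun u : ℝ => u / 2 * Real.log u) _ u := hd.mul hl
    convert this using 1
    field_simp
  have h3 : HasDerivAt (fun u : ℝ => (u + 1) / 2 * Real.log ((u + 1) / 2))
      (1/2 * Real.log ((u + 1) / 2) + 1/2) u := by
    have hi : HasDerivAt (fun u : ℝ => (u + 1) / 2) (1/2) u := by
      simpa using ((hasDerivAt_id u).add_const 1).div_const 2
    have hl : HasDerivAt (fun u : ℝ => Real.log ((u + 1) / 2)) (((u+1)/2)⁻¹ * (1/2)) u :=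
      by have := (Real.hasDerivAt_log (ne_of_gt h0)).comp u hi; exact this
    have : HasDerivAt (fun u : ℝ => (u + 1) / 2 * Real.log ((u + 1) / 2)) _ u := hi.mul hl
    convert this using 1
    field_simp
  have : HasDerivAt (fun u : ℝ => 1/8 * (u - 1)^2 -
        (u / 2 * Real.log u - (u + 1) / 2 * Real.log ((u + 1) / 2))) _ u := h1.sub (h2.sub h3)
  convert this using 1
  ring

theorem js_generator_quadratic_bounds :
    (∀ u : ℝ, 1 ≤ u →
        u / 2 * Real.log u - (u + 1) / 2 * Real.log ((u + 1) / 2) ≤ 1/8 * (u - 1)^2) ∧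
    (∀ u : ℝ, 0 < u → u ≤ 1 →
        1/8 * (u - 1)^2 ≤ u / 2 * Real.log u - (u + 1) / 2 * Real.log ((u + 1) / 2)) := by
  set g : ℝ → ℝ := fun u => 1/8 * (u - 1)^2 -
      (u / 2 * Real.log u - (u + 1) / 2 * Real.log ((u + 1) / 2)) with hg
  have hderiv : ∀ u ∈ Set.Ioi (0:ℝ), 0 ≤ deriv g u := by
    intro u hu
    have hu : (0:ℝ) < u := hu
    have h0 : (0:ℝ) < (u + 1) / 2 := by linarith
    rw [(js_hasDerivAt u hu).deriv]
    -- log u - log ((u+1)/2) = log (2u/(u+1)) ≤ 2u/(u+1) - 1 = (u-1)/(u+1)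
    have hratio : (0:ℝ) < u / ((u + 1) / 2) := div_pos hu h0
    have hlog : Real.log u - Real.log ((u + 1) / 2) ≤ u / ((u + 1) / 2) - 1 := by
      rw [← Real.log_div (ne_of_gt hu) (ne_of_gt h0)]
      exact Real.log_le_sub_one_of_pos hratio
    have hval : u / ((u + 1) / 2) - 1 = (u - 1) / (u + 1) := by
      field_simp
      ring
    have halg : (u - 1) / (u + 1) ≤ (u - 1) / 2 := by
      rw [div_le_div_iff₀ (by linarith : (0:ℝ) < u + 1) (by norm_num : (0:ℝ) < 2)]
      nlinarith [sq_nonneg (u - 1)]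
    rw [hval] at hlog
    linarith
  have hdiff : ∀ u ∈ Set.Ioi (0:ℝ), DifferentiableAt ℝ g u := fun u hu =>
    (js_hasDerivAt u hu).differentiableAt
  have hmono : MonotoneOn g (Set.Ioi (0:ℝ)) := by
    apply monotoneOn_of_deriv_nonneg (convex_Ioi 0)
    · exact fun u hu => (hdiff u hu).continuousAt.continuousWithinAt
    · intro u hu
      rw [interior_Ioi] at hu
      exact (hdiff u hu).differentiableWithinAt
    · intro u hu
      rw [interior_Ioi] at hu
      exact hderiv u hu
  have hg1 : g 1 = 0 := by
    norm_num [hg, Real.log_one]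
  constructor
  · intro u hu
    have := hmono (Set.mem_Ioi.mpr one_pos) (Set.mem_Ioi.mpr (by linarith : (0:ℝ) < u)) hu
    rw [hg1] at this
    simp only [hg] at this
    linarith
  · intro u hu0 hu1
    have := hmono (Set.mem_Ioi.mpr hu0) (Set.mem_Ioi.mpr one_pos) hu1
    rw [hg1] at this
    simp only [hg] at this
    linarith
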